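/- arXiv:math/0602550 — 2 statements merged into one kernel-verified Lean document; each statement's English description precedes it below -/
import Mathlib

section
/- Let R̂ denote the 𝔪-adic completion of R. An ideal I of R containing 𝐮R belongs to 𝓘(R,𝐮) if and only if the extended ideal I·R̂ belongs to 𝓘(R̂,𝐮), where 𝓘(R̂,𝐮) is defined using the images of u₁, …, uₙ in R̂. -/
open IsLocalRing

/-- The bracket power `J^{[q]}` of an ideal `J`: the ideal generated by the
`q`-th powers of the elements of `J`. -/
def Ideal.bracketPow {R : Type*} [CommRing R] (J : Ideal R) (q : ℕ) : Ideal R :=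
  Ideal.span ((fun a => a ^ q) '' (J : Set R))

/-- A Noetherian local ring is regular if its maximal ideal can be generated by
`d` elements, where `d` is the Krull dimension of the ring. -/
def IsRegularLocal (R : Type*) [CommRing R] [IsLocalRing R] : Prop :=
  IsNoetherianRing R ∧ ∃ s : Finset R,
    Ideal.span (s : Set R) = maximalIdeal R ∧ (s.card : WithBot ℕ∞) = ringKrullDim R

/-- `I ∈ 𝓘(S, 𝐯)`: the ideal `I` contains `𝐯S = (v₁, …, vₙ)S` and satisfies
`v^(p-1)·(I + 𝐯S) ⊆ I^{[p]} + 𝐯^p S`, where `v = v₁⋯vₙ`. -/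
def MemCalI {S : Type*} [CommRing S] (p : ℕ) {n : ℕ} (v : Fin n → S) (I : Ideal S) : Prop :=
  Ideal.span (Set.range v) ≤ I ∧
    ∀ r ∈ I ⊔ Ideal.span (Set.range v),
      (∏ i, v i) ^ (p - 1) * r ∈ I.bracketPow p ⊔ Ideal.span (Set.range fun i => v i ^ p)

lemma bracketPow_span' {R : Type*} [CommRing R] (p : ℕ) (hp : p.Prime) [CharP R p] (s : Set R) :
    (Ideal.span s).bracketPow p = Ideal.span ((fun a => a ^ p) '' s) := by
  haveI : Fact p.Prime := ⟨hp⟩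
  apply le_antisymm
  · rw [Ideal.bracketPow, Ideal.span_le]
    rintro _ ⟨a, ha, rfl⟩
    simp only [SetLike.mem_coe] at ha ⊢
    induction ha using Submodule.span_induction with
    | mem x hx => exact Ideal.subset_span ⟨x, hx, rfl⟩
    | zero => simp [zero_pow hp.ne_zero]
    | add x y _ _ hx hy => rw [add_pow_char]; exact Ideal.add_mem _ hx hy
    | smul r x _ hx => rw [smul_eq_mul, mul_pow]; exact Ideal.mul_mem_left _ _ hx
  · rw [Ideal.span_le]
    rintro _ ⟨a, ha, rfl⟩
    exact Ideal.subset_span ⟨a, Ideal.subset_span ha, rfl⟩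

lemma bracketPow_map' {R S : Type*} [CommRing R] [CommRing S] (f : R →+* S) (p : ℕ)
    (hp : p.Prime) [CharP S p] (J : Ideal R) :
    (J.map f).bracketPow p = (J.bracketPow p).map f := by
  rw [show J.map f = Ideal.span (f '' J) from rfl, bracketPow_span' p hp,
    Ideal.bracketPow, Ideal.map_span, ← Set.image_comp, ← Set.image_comp]
  congr 1
  ext x
  simp only [Set.mem_image, Function.comp_apply]
  constructor
  · rintro ⟨a, ha, rfl⟩; exact ⟨a, ha, map_pow f a p⟩
  · rintro ⟨a, ha, rfl⟩; exact ⟨a, ha, (map_pow f a p).symm⟩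

lemma comap_map_adicCompletion {R : Type*} [CommRing R] [IsLocalRing R] [IsNoetherianRing R]
    (J : Ideal R) {a : R}
    (h : algebraMap R (AdicCompletion (maximalIdeal R) R) a ∈
      J.map (algebraMap R (AdicCompletion (maximalIdeal R) R))) : a ∈ J := by
  set m := maximalIdeal R
  -- step 1: a ∈ J ⊔ m ^ n for all n
  have key : ∀ n : ℕ, a ∈ J ⊔ m ^ n := by
    intro n
    have h3 : (AdicCompletion.evalₐ m n).toRingHom.comp (algebraMap R (AdicCompletion m R)) =
        Ideal.Quotient.mk (m ^ n) := by
      ext x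
      simp [Ideal.Quotient.algebraMap_eq]
    have h2 : Ideal.Quotient.mk (m ^ n) a ∈ J.map (Ideal.Quotient.mk (m ^ n)) := by
      rw [← h3, ← Ideal.map_map]
      exact Ideal.mem_map_of_mem _ h
    have h5 : a ∈ Ideal.comap (Ideal.Quotient.mk (m ^ n))
        (J.map (Ideal.Quotient.mk (m ^ n))) := h2
    rwa [Ideal.comap_map_of_surjective _ Ideal.Quotient.mk_surjective, ← RingHom.ker_eq_comap_bot,
      Ideal.mk_ker] at h5
  by_cases hJ : J = ⊤
  · simp [hJ]
  -- step 2: Krull intersection in R ⧸ J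
  have hm : m ≠ ⊤ := Ideal.IsPrime.ne_top inferInstance
  have krull := Ideal.iInf_pow_smul_eq_bot_of_isLocalRing (M := R ⧸ J) m hm
  have hmem : Ideal.Quotient.mk J a ∈ (⨅ i : ℕ, m ^ i • ⊤ : Submodule R (R ⧸ J)) := by
    rw [Submodule.mem_iInf]
    intro n
    obtain ⟨b, hb, c, hc, rfl⟩ := Submodule.mem_sup.mp (key n)
    have : (Ideal.Quotient.mk J) (b + c) = c • Ideal.Quotient.mk J 1 := by
      simp [Ideal.Quotient.eq_zero_iff_mem.mpr hb, Algebra.smul_def,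
        Ideal.Quotient.algebraMap_eq]
    rw [this]
    exact Submodule.smul_mem_smul hc Submodule.mem_top
  rw [krull] at hmem
  exact Ideal.Quotient.eq_zero_iff_mem.mp hmem

lemma mul_mem_map_of_forall {R S : Type*} [CommRing R] [CommRing S] (f : R →+* S) (c : R)
    (K L : Ideal R) (h : ∀ r ∈ K, c * r ∈ L) :
    ∀ r ∈ K.map f, f c * r ∈ L.map f := by
  have h1 : Ideal.span {c} * K ≤ L := Ideal.span_singleton_mul_le_iff.mpr h
  have h2 : Ideal.span {f c} * K.map f ≤ L.map f := by
    calc Ideal.span {f c} * K.map f = (Ideal.span {c}).map f * K.map f := by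
          rw [Ideal.map_span, Set.image_singleton]
      _ = (Ideal.span {c} * K).map f := (Ideal.map_mul f _ _).symm
      _ ≤ L.map f := Ideal.map_mono h1
  exact fun r hr => Ideal.span_singleton_mul_le_iff.mp h2 r hr

/-- Let `R̂` be the `𝔪`-adic completion of `R`.  An ideal `I ⊇ 𝐮R`
of `R` belongs to `𝓘(R, 𝐮)` if and only if `I·R̂ ∈ 𝓘(R̂, 𝐮)`, the latter being defined
using the images of `u₁, …, uₙ` in `R̂`. -/
theorem statement6 {R : Type*} [CommRing R] [IsLocalRing R]
    (p : ℕ) (hp : p.Prime) [CharP R p] (hreg : IsRegularLocal R)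
    {n : ℕ} (u : Fin n → R) (hu : ∀ i, u i ∈ maximalIdeal R)
    (hureg : RingTheory.Sequence.IsRegular R (List.ofFn u))
    (I : Ideal R) (hI : Ideal.span (Set.range u) ≤ I) :
    MemCalI p u I ↔
      MemCalI p
        (fun i => algebraMap R (AdicCompletion (maximalIdeal R) R) (u i))
        (I.map (algebraMap R (AdicCompletion (maximalIdeal R) R))) := by
  have hNoeth : IsNoetherianRing R := hreg.1
  set S := AdicCompletion (maximalIdeal R) R with hS
  set f := algebraMap R S with hf
  have hcomap : ∀ (J : Ideal R) (a : R), f a ∈ J.map f → a ∈ J :=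
    fun J a h => comap_map_adicCompletion J h
  have hinj : Function.Injective f := by
    intro a b hab
    have hmem : a - b ∈ (⊥ : Ideal R) := hcomap ⊥ (a - b) (by
      rw [Ideal.map_bot]
      simp [map_sub, hab])
    simpa [sub_eq_zero] using hmem
  haveI : CharP S p := charP_of_injective_ringHom hinj p
  have hspan : Ideal.span (Set.range fun i => f (u i)) = (Ideal.span (Set.range u)).map f := by
    rw [Ideal.map_span, ← Set.range_comp]
    rfl
  have hspanp : Ideal.span (Set.range fun i => f (u i) ^ p) =
      (Ideal.span (Set.range fun i => u i ^ p)).map f := by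
    have e : (fun i => f (u i) ^ p) = f ∘ (fun i => u i ^ p) := by
      funext i
      exact (map_pow f (u i) p).symm
    rw [e, Ideal.map_span, ← Set.range_comp]
  have hprod : (∏ i, f (u i)) ^ (p - 1) = f ((∏ i, u i) ^ (p - 1)) := by
    rw [map_pow, map_prod]
  unfold MemCalI
  simp only [hspan, hspanp, hprod, bracketPow_map' (f : R →+* S) p hp, ← Ideal.map_sup]
  erw [hspan, hspanp]
  simp only [← Ideal.map_sup]
  constructor
  · rintro ⟨h1, h2⟩
    exact ⟨Ideal.map_mono h1, mul_mem_map_of_forall (f : R →+* S) _ _ _ h2⟩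
  · rintro ⟨h1, h2⟩
    refine ⟨hI, fun r hr => ?_⟩
    have := h2 (f r) (Ideal.mem_map_of_mem (f : R →+* S) hr)
    rw [← map_mul] at this
    exact hcomap _ _ this
end

section
/- Let K be a field of prime characteristic p and let R be the localization of the polynomial ring K[x,y] at the maximal ideal (x,y). Then the set of ideals I of R satisfying xyR ⊆ I and (xy)^{p−1}·I ⊆ I^{[p]} + (xy)^p R is exactly {xyR, xR, yR, (x,y)R, R}. -/
namespace S14

open MvPolynomial

/-! ### Basic facts about the maximal ideal `(X 0, X 1)` of `K[x,y]` -/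

variable {K : Type*} [Field K]

/-- The maximal ideal (X0, X1). -/
noncomputable abbrev PP (K : Type*) [Field K] : Ideal (MvPolynomial (Fin 2) K) := Ideal.span {X 0, X 1}

lemma X_mem_PP (i : Fin 2) : (X i : MvPolynomial (Fin 2) K) ∈ PP K := by
  fin_cases i <;> exact Ideal.subset_span (by simp)

lemma sub_C_constantCoeff_mem (f : MvPolynomial (Fin 2) K) :
    f - C (constantCoeff f) ∈ PP K := by
  induction f using MvPolynomial.induction_on with
  | C a => simp
  | add f g hf hg =>
    have : f + g - C (constantCoeff (f + g)) =
        (f - C (constantCoeff f)) + (g - C (constantCoeff g)) := by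
      rw [map_add, map_add]; ring
    rw [this]; exact add_mem hf hg
  | mul_X f i hf =>
    have : f * X i - C (constantCoeff (f * X i)) = f * X i := by simp
    rw [this]
    exact Ideal.mul_mem_left _ _ (X_mem_PP i)

lemma PP_eq_ker : PP K = RingHom.ker (constantCoeff (σ := Fin 2) (R := K)) := by
  apply le_antisymm
  · rw [Ideal.span_le]
    rintro f (rfl | rfl) <;> simp [RingHom.mem_ker]
  · intro f hf
    rw [RingHom.mem_ker] at hf
    have := sub_C_constantCoeff_mem f
    rwa [hf, map_zero, sub_zero] at this

lemma mem_PP_iff {f : MvPolynomial (Fin 2) K} : f ∈ PP K ↔ constantCoeff f = 0 := by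
  rw [PP_eq_ker, RingHom.mem_ker]

lemma PP_isPrime : (PP K).IsPrime := by
  rw [PP_eq_ker]
  exact RingHom.ker_isPrime _

/-! ### Localization basics -/

section Localization

variable [(PP K).IsPrime]

local notation "A" => MvPolynomial (Fin 2) K
local notation "R" => Localization.AtPrime (PP K)
local notation "ℓ" => algebraMap (MvPolynomial (Fin 2) K) (Localization.AtPrime (PP K))

lemma ell_injective : Function.Injective (ℓ) :=
  IsLocalization.injective _ (PP K).primeCompl_le_nonZeroDivisors

lemma ell_isUnit {s : A} (hs : s ∉ PP K) : IsUnit (ℓ s) :=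
  IsLocalization.map_units _ (⟨s, hs⟩ : (PP K).primeCompl)

/-- contraction -/
lemma exists_smul_mem {J : Ideal A} {f : A} (h : ℓ f ∈ J.map (ℓ)) :
    ∃ s ∉ PP K, s * f ∈ J := by
  obtain ⟨⟨a, s⟩, hs⟩ := (IsLocalization.mem_map_algebraMap_iff (PP K).primeCompl _).1 h
  refine ⟨s.1, s.2, ?_⟩
  have h2 : ℓ (f * s.1) = ℓ a.1 := by rw [map_mul]; exact hs
  have h3 := ell_injective h2
  rw [mul_comm, h3]; exact a.2

/-- saturation -/
lemma mem_of_mul_mem {I : Ideal R} {f t : A} (ht : t ∉ PP K)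
    (h : t * f ∈ I.comap (ℓ)) : f ∈ I.comap (ℓ) := by
  have hu := ell_isUnit (K := K) ht
  rw [Ideal.mem_comap] at h ⊢
  have : ℓ f = hu.unit⁻¹ * (ℓ (t * f)) := by
    rw [map_mul, ← mul_assoc]
    simp [IsUnit.val_inv_mul]
  rw [this]
  exact Ideal.mul_mem_left _ _ h

lemma map_comap_ell (I : Ideal R) : (I.comap (ℓ)).map (ℓ) = I :=
  IsLocalization.map_comap (PP K).primeCompl _ I

end Localization

/-! ### The Cartier-type operator over a perfect field -/

section Cartier

variable {L : Type*} [Field L] {p : ℕ} [Fact p.Prime] [CharP L p] [PerfectRing L p]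

/-- `p`-th root of a coefficient. -/
noncomputable def rt (L : Type*) [Field L] (p : ℕ) [Fact p.Prime] [CharP L p]
    [PerfectRing L p] : L ≃+* L := (frobeniusEquiv L p).symm

noncomputable def shrink (p : ℕ) (m : Fin 2 →₀ ℕ) : Fin 2 →₀ ℕ :=
  Finsupp.mapRange (· / p) (Nat.zero_div p) m

/-- The Cartier-type operator. -/
noncomputable def T (L : Type*) [Field L] (p : ℕ) [Fact p.Prime] [CharP L p]
    [PerfectRing L p] (f : MvPolynomial (Fin 2) L) : MvPolynomial (Fin 2) L :=
  Finsupp.sum (AddMonoidAlgebra.coeff f) fun m c =>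
    if ∀ i, m i % p = p - 1 then monomial (shrink p m) (rt L p c) else 0

lemma T_monomial (m : Fin 2 →₀ ℕ) (c : L) :
    T L p (monomial m c) =
      if ∀ i, m i % p = p - 1 then monomial (shrink p m) (rt L p c) else 0 := by
  rw [T, ← single_eq_monomial, AddMonoidAlgebra.coeff_single]
  refine Finsupp.sum_single_index ?_
  split <;> simp

lemma T_add (f g : MvPolynomial (Fin 2) L) : T L p (f + g) = T L p f + T L p g := by
  classical
  rw [T, T, T, AddMonoidAlgebra.coeff_add]
  refine Finsupp.sum_add_index' ?_ ?_
  · intro m; split <;> simp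
  · intro m c1 c2
    split
    · rw [map_add, map_add]
    · simp

lemma T_zero : T L p (0 : MvPolynomial (Fin 2) L) = 0 := by
  rw [T, AddMonoidAlgebra.coeff_zero]; exact Finsupp.sum_zero_index

/-- `T` bundled as an additive monoid hom. -/
noncomputable def Thom (L : Type*) [Field L] (p : ℕ) [Fact p.Prime] [CharP L p]
    [PerfectRing L p] : MvPolynomial (Fin 2) L →+ MvPolynomial (Fin 2) L where
  toFun := T L p
  map_zero' := T_zero
  map_add' := T_add

lemma T_pow_mul (g f : MvPolynomial (Fin 2) L) : T L p (g ^ p * f) = g * T L p f := by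
  have hp : 0 < p := (Fact.out : p.Prime).pos
  induction g using MvPolynomial.induction_on' with
  | add g1 g2 h1 h2 =>
    rw [add_pow_char, add_mul, T_add, h1, h2, add_mul]
  | monomial n d =>
    induction f using MvPolynomial.induction_on' with
    | add f1 f2 h1 h2 => rw [mul_add, T_add, h1, h2, T_add, mul_add]
    | monomial m c =>
      rw [monomial_pow, monomial_mul, T_monomial, T_monomial]
      have hcond : (∀ i, (p • n + m) i % p = p - 1) ↔ (∀ i, m i % p = p - 1) := by
        refine forall_congr' fun i => ?_
        simp only [Finsupp.add_apply, Finsupp.smul_apply, smul_eq_mul]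
        rw [Nat.mul_add_mod]
      by_cases hm : ∀ i, m i % p = p - 1
      · rw [if_pos (hcond.2 hm), if_pos hm]
        have hsh : shrink p (p • n + m) = n + shrink p m := by
          ext i
          simp only [shrink, Finsupp.mapRange_apply, Finsupp.add_apply, Finsupp.smul_apply,
            smul_eq_mul]
          rw [Nat.mul_add_div hp]
        have hrt : rt L p (d ^ p * c) = d * rt L p c := by
          rw [map_mul]
          congr 1
          simp [rt, frobeniusEquiv_symm_pow_p]
        rw [hsh, hrt, monomial_mul]
      · rw [if_neg (fun h => hm (hcond.1 h)), if_neg hm, mul_zero]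

lemma T_uA : T L p (((X 0 * X 1 : MvPolynomial (Fin 2) L)) ^ (p - 1)) = 1 := by
  have hp1 : p - 1 < p := Nat.sub_lt (Fact.out : p.Prime).pos one_pos
  have hXX : (X 0 * X 1 : MvPolynomial (Fin 2) L) =
      monomial (Finsupp.single 0 1 + Finsupp.single 1 1) 1 := by
    rw [X, X, monomial_mul, one_mul]
  rw [hXX, monomial_pow, one_pow, T_monomial]
  have hval : ∀ i : Fin 2, (((p - 1) • (Finsupp.single (0 : Fin 2) 1
      + Finsupp.single (1 : Fin 2) 1) : Fin 2 →₀ ℕ)) i = p - 1 := by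
    intro i
    simp only [Finsupp.smul_apply, Finsupp.add_apply, smul_eq_mul]
    fin_cases i <;> simp
  rw [if_pos (by intro i; rw [hval i]; exact Nat.mod_eq_of_lt hp1)]
  have hsh : shrink p ((p - 1) • (Finsupp.single (0 : Fin 2) 1
      + Finsupp.single (1 : Fin 2) 1)) = 0 := by
    ext i
    rw [shrink, Finsupp.mapRange_apply, hval i]
    exact Nat.div_eq_of_lt hp1
  rw [hsh, map_one, monomial_zero']
  exact C_1

end Cartier

/-! ### Decomposition into pure parts -/

section Parts

section
variable {L : Type*} [Field L]

noncomputable def ν (L : Type*) [Field L] (j : Fin 2) :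
    MvPolynomial (Fin 2) L →ₐ[L] Polynomial L :=
  aeval (fun i => if i = j then Polynomial.X else 0)

noncomputable def ε (L : Type*) [Field L] (j : Fin 2) :
    Polynomial L →ₐ[L] MvPolynomial (Fin 2) L :=
  Polynomial.aeval (X j)

lemma nu_coeff_zero (j : Fin 2) (f : MvPolynomial (Fin 2) L) :
    (ν L j f).coeff 0 = constantCoeff f := by
  rw [Polynomial.coeff_zero_eq_eval_zero]
  have : (Polynomial.evalRingHom (0:L)).comp (ν L j).toRingHom
      = constantCoeff (σ := Fin 2) (R := L) := by
    apply MvPolynomial.ringHom_ext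
    · intro a; simp [ν]
    · intro i; simp only [RingHom.comp_apply, AlgHom.toRingHom_eq_coe, RingHom.coe_coe]
      by_cases h : i = j <;> simp [ν, h]
  exact congrFun (congrArg (fun g => g.toFun) this) f

lemma cc_eps (j : Fin 2) (F : Polynomial L) :
    constantCoeff (ε L j F) = F.eval 0 := by
  have : (constantCoeff (σ := Fin 2) (R := L)).comp (ε L j).toRingHom
      = Polynomial.evalRingHom (0:L) := by
    apply Polynomial.ringHom_ext
    · intro a; simp [ε]
    · simp [ε]
  exact congrFun (congrArg (fun g => g.toFun) this) F

lemma eps_X (j : Fin 2) : ε L j Polynomial.X = X j := Polynomial.aeval_X _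

/-- factorization of a nonzero univariate with zero constant term -/
lemma pure_factor (j : Fin 2) (F : Polynomial L) (hF0 : F ≠ 0) (hcc : F.coeff 0 = 0) :
    ∃ (k : ℕ) (g : MvPolynomial (Fin 2) L),
      ε L j F = X j ^ (k + 1) * g ∧ constantCoeff g ≠ 0 := by
  obtain ⟨q, hq, hndvd⟩ := F.exists_eq_pow_rootMultiplicity_mul_and_not_dvd hF0 0
  simp only [map_zero, sub_zero] at hq hndvd
  have hk : 0 < F.rootMultiplicity 0 :=
    (Polynomial.rootMultiplicity_pos hF0).2
      (by rwa [Polynomial.IsRoot, ← Polynomial.coeff_zero_eq_eval_zero])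
  set m := F.rootMultiplicity 0 with hm
  refine ⟨m - 1, ε L j q, ?_, ?_⟩
  · rw [Nat.sub_add_cancel hk, hq, map_mul, map_pow, eps_X]
  · rw [cc_eps, ← Polynomial.coeff_zero_eq_eval_zero]
    intro h
    exact hndvd (Polynomial.X_dvd_iff.2 h)

lemma part_dvd (j : Fin 2) (f : MvPolynomial (Fin 2) L) (h : constantCoeff f = 0) :
    X j ∣ ε L j (ν L j f) := by
  have : Polynomial.X ∣ ν L j f := Polynomial.X_dvd_iff.2 (by rw [nu_coeff_zero, h])
  obtain ⟨q, hq⟩ := this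
  exact ⟨ε L j q, by rw [hq, map_mul, eps_X]⟩

lemma dec1 (j j' : Fin 2) (hne : j ≠ j') (hcov : ∀ i : Fin 2, i = j ∨ i = j')
    (f : MvPolynomial (Fin 2) L) :
    f - ε L j (ν L j f) ∈ Ideal.span {(X j' : MvPolynomial (Fin 2) L)} := by
  induction f using MvPolynomial.induction_on with
  | C a => simp [ν, ε]
  | add f g hf hg =>
    have : f + g - ε L j (ν L j (f + g)) =
        (f - ε L j (ν L j f)) + (g - ε L j (ν L j g)) := by
      rw [map_add, map_add]; ring
    rw [this]; exact add_mem hf hg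
  | mul_X f i hf =>
    rcases hcov i with rfl | rfl
    · have hXi : ν L i (X i) = Polynomial.X := by simp [ν]
      have : f * X i - ε L i (ν L i (f * X i)) = (f - ε L i (ν L i f)) * X i := by
        simp only [map_mul, hXi, eps_X]; ring
      rw [this]
      exact Ideal.mul_mem_right _ _ hf
    · have : ν L j (X i) = 0 := by
        simp only [ν, MvPolynomial.aeval_X]
        simp [hne.symm]
      have h2 : f * X i - ε L j (ν L j (f * X i)) = f * X i := by
        rw [map_mul, this, mul_zero, map_zero, sub_zero]
      rw [h2]
      exact Ideal.mul_mem_left _ _ (Ideal.subset_span rfl)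


lemma dec2 (f : MvPolynomial (Fin 2) L) :
    f - ε L 0 (ν L 0 f) - ε L 1 (ν L 1 f) + C (constantCoeff f)
      ∈ Ideal.span {(X 0 * X 1 : MvPolynomial (Fin 2) L)} := by
  induction f using MvPolynomial.induction_on with
  | C a =>
    have : (C a : MvPolynomial (Fin 2) L) - ε L 0 (ν L 0 (C a)) - ε L 1 (ν L 1 (C a))
        + C (constantCoeff (C a : MvPolynomial (Fin 2) L)) = 0 := by
      simp [ν, ε]
    rw [this]; exact zero_mem _
  | add f g hf hg =>
    have : f + g - ε L 0 (ν L 0 (f + g)) - ε L 1 (ν L 1 (f + g))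
        + C (constantCoeff (f + g)) =
        (f - ε L 0 (ν L 0 f) - ε L 1 (ν L 1 f) + C (constantCoeff f)) +
        (g - ε L 0 (ν L 0 g) - ε L 1 (ν L 1 g) + C (constantCoeff g)) := by
      simp only [map_add]; ring
    rw [this]; exact add_mem hf hg
  | mul_X f i hf =>
    rcases (by fin_cases i <;> simp : i = 0 ∨ i = 1) with hi | hi <;> subst hi
    · have hXj : ν L 0 (X (0 : Fin 2)) = Polynomial.X := by simp [ν]
      have hXj' : ν L 1 (X (0 : Fin 2)) = 0 := by
        simp [ν, (by decide : (0 : Fin 2) ≠ 1)]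
      obtain ⟨w, hw⟩ := Ideal.mem_span_singleton.1 (dec1 0 1 (by decide) (by decide) f)
      have hgoal : f * X 0 - ε L 0 (ν L 0 (f * X 0)) - ε L 1 (ν L 1 (f * X 0))
          + C (constantCoeff (f * X 0)) = (X 0 * X 1) * w := by
        simp only [map_mul, hXj, hXj', eps_X, mul_zero, map_zero, constantCoeff_X,
          C_0, add_zero, sub_zero]
        calc f * X 0 - ε L 0 (ν L 0 f) * X 0 = (f - ε L 0 (ν L 0 f)) * X 0 := by ring
        _ = X 1 * w * X 0 := by rw [hw]
        _ = X 0 * X 1 * w := by ring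
      rw [hgoal]
      exact Ideal.mem_span_singleton.2 ⟨w, rfl⟩
    · have hXj : ν L 1 (X (1 : Fin 2)) = Polynomial.X := by simp [ν]
      have hXj' : ν L 0 (X (1 : Fin 2)) = 0 := by
        simp [ν, (by decide : (1 : Fin 2) ≠ 0)]
      obtain ⟨w, hw⟩ := Ideal.mem_span_singleton.1 (dec1 1 0 (by decide) (by decide) f)
      have hgoal : f * X 1 - ε L 0 (ν L 0 (f * X 1)) - ε L 1 (ν L 1 (f * X 1))
          + C (constantCoeff (f * X 1)) = (X 0 * X 1) * w := by
        simp only [map_mul, hXj, hXj', eps_X, mul_zero, map_zero, constantCoeff_X,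
          C_0, add_zero, sub_zero]
        calc f * X 1 - ε L 1 (ν L 1 f) * X 1 = (f - ε L 1 (ν L 1 f)) * X 1 := by ring
        _ = X 0 * w * X 1 := by rw [hw]
        _ = X 0 * X 1 * w := by ring
      rw [hgoal]
      exact Ideal.mem_span_singleton.2 ⟨w, rfl⟩

end
end Parts

/-! ### Classification over a perfect field -/

section Classify

variable {L : Type*} [Field L] {p : ℕ} [Fact p.Prime] [CharP L p] [PerfectRing L p]
  [(PP L).IsPrime]

local notation "A" => MvPolynomial (Fin 2) L
local notation "R" => Localization.AtPrime (PP L)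
local notation "ℓ" => algebraMap (MvPolynomial (Fin 2) L) (Localization.AtPrime (PP L))

theorem classify (I : Ideal (Localization.AtPrime (PP L)))
    (h1 : Ideal.span {ℓ (X 0 * X 1)} ≤ I)
    (h2 : ∀ r ∈ I, (ℓ (X 0 * X 1)) ^ (p - 1) * r ∈
      I.bracketPow p ⊔ Ideal.span {ℓ (X 0 * X 1) ^ p}) :
    I = Ideal.span {ℓ (X 0 * X 1)} ∨ I = Ideal.span {ℓ (X 0)} ∨ I = Ideal.span {ℓ (X 1)} ∨
      I = Ideal.span {ℓ (X 0), ℓ (X 1)} ∨ I = ⊤ := by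
  classical
  have hp : p.Prime := Fact.out
  set J : Ideal (MvPolynomial (Fin 2) L) := I.comap (ℓ) with hJdef
  have huAJ : (X 0 * X 1 : MvPolynomial (Fin 2) L) ∈ J :=
    Ideal.mem_comap.2 (h1 (Ideal.subset_span rfl))
  -- the bracket power corresponds
  have hbp1 : (J.bracketPow p).map (ℓ) = I.bracketPow p := by
    apply le_antisymm
    · rw [Ideal.map_le_iff_le_comap, Ideal.bracketPow, Ideal.span_le]
      rintro _ ⟨g, hg, rfl⟩
      rw [SetLike.mem_coe, Ideal.mem_comap, map_pow]
      exact Ideal.subset_span ⟨ℓ g, hg, rfl⟩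
    · rw [Ideal.bracketPow, Ideal.span_le]
      rintro _ ⟨r, hr, rfl⟩
      have hrm : r ∈ J.map (ℓ) := by rw [hJdef, map_comap_ell]; exact hr
      obtain ⟨⟨a, s⟩, hs⟩ := (IsLocalization.mem_map_algebraMap_iff (PP L).primeCompl _).1 hrm
      have hps : r ^ p * ℓ (s.1 ^ p) = ℓ (a.1 ^ p) := by
        rw [map_pow, map_pow, ← mul_pow, hs]
      refine SetLike.mem_coe.2 ((IsLocalization.mem_map_algebraMap_iff
        (PP L).primeCompl _).2 ⟨⟨⟨a.1 ^ p, ?_⟩, ⟨s.1 ^ p, pow_mem s.2 p⟩⟩, hps⟩)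
      exact Ideal.subset_span ⟨a.1, a.2, rfl⟩
  have hbp2 : (Ideal.span {(X 0 * X 1 : MvPolynomial (Fin 2) L) ^ p}).map (ℓ)
      = Ideal.span {ℓ (X 0 * X 1) ^ p} := by
    rw [Ideal.map_span, Set.image_singleton, map_pow]
  have hbpEq : I.bracketPow p ⊔ Ideal.span {ℓ (X 0 * X 1) ^ p}
      = (J.bracketPow p ⊔ Ideal.span {(X 0 * X 1 : MvPolynomial (Fin 2) L) ^ p}).map (ℓ) := by
    rw [Ideal.map_sup, hbp1, hbp2]
  -- the Cartier operator sends the right hand side into J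
  have Tmem : ∀ z ∈ J.bracketPow p ⊔
      Ideal.span {(X 0 * X 1 : MvPolynomial (Fin 2) L) ^ p}, T L p z ∈ J := by
    intro z hz
    rw [Ideal.bracketPow, ← Ideal.span_union] at hz
    obtain ⟨n, aa, gg, hsum⟩ := Submodule.mem_span_set'.1 hz
    have hTz : T L p z = ∑ i, T L p (aa i • (gg i : MvPolynomial (Fin 2) L)) := by
      rw [← hsum]
      exact map_sum (Thom L p) _ _
    rw [hTz]
    apply sum_mem
    intro i _
    rcases (gg i).2 with ⟨w, hw, hwe⟩ | he
    · have heq : aa i • (gg i : MvPolynomial (Fin 2) L) = w ^ p * aa i := by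
        rw [smul_eq_mul, ← hwe, mul_comm]
      rw [heq, T_pow_mul]
      exact Ideal.mul_mem_right _ _ hw
    · have heq : aa i • (gg i : MvPolynomial (Fin 2) L)
          = (X 0 * X 1 : MvPolynomial (Fin 2) L) ^ p * aa i := by
        rw [smul_eq_mul, he, mul_comm]
      rw [heq, T_pow_mul]
      exact Ideal.mul_mem_right _ _ huAJ
  -- J is closed under p-th roots
  have step : ∀ f : MvPolynomial (Fin 2) L, f ^ p ∈ J → f ∈ J := by
    intro f hf
    have h2' := h2 (ℓ (f ^ p)) (Ideal.mem_comap.1 hf)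
    rw [hbpEq, ← map_pow, ← map_mul] at h2'
    obtain ⟨s, hs, hsf⟩ := exists_smul_mem h2'
    have hsp : s ^ p = s ^ (p - 1) * s := by
      rw [← pow_succ, Nat.sub_add_cancel hp.one_le]
    have h3 : s ^ p * ((X 0 * X 1) ^ (p - 1) * f ^ p) ∈ J.bracketPow p ⊔
        Ideal.span {(X 0 * X 1 : MvPolynomial (Fin 2) L) ^ p} := by
      rw [hsp, mul_assoc]
      exact Ideal.mul_mem_left _ _ hsf
    have h4 := Tmem _ h3
    rw [T_pow_mul] at h4
    have h5 : T L p ((X 0 * X 1) ^ (p - 1) * f ^ p) = f := by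
      rw [mul_comm, T_pow_mul, T_uA, mul_one]
    rw [h5] at h4
    exact mem_of_mul_mem hs h4
  -- J is radical
  have rad : ∀ (f : MvPolynomial (Fin 2) L) (n : ℕ), n ≠ 0 → f ^ n ∈ J → f ∈ J := by
    have radp : ∀ (e : ℕ) (f : MvPolynomial (Fin 2) L), f ^ (p ^ e) ∈ J → f ∈ J := by
      intro e
      induction e with
      | zero => intro f h; rwa [pow_zero, pow_one] at h
      | succ e ih =>
        intro f h
        rw [pow_succ', pow_mul] at h
        exact step f (ih _ h)
    intro f n hn hf
    have hnp : n ≤ p ^ n := le_of_lt (Nat.lt_pow_self (n := n) hp.one_lt)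
    refine radp n f ?_
    have : f ^ (p ^ n) = f ^ n * f ^ (p ^ n - n) := by
      rw [← pow_add, Nat.add_sub_cancel' hnp]
    rw [this]
    exact Ideal.mul_mem_right _ _ hf
  obtain hT | hT := Classical.em (I = ⊤)
  · exact Or.inr (Or.inr (Or.inr (Or.inr hT)))
  -- constant coefficients vanish
  have hccJ : ∀ f ∈ J, constantCoeff f = 0 := by
    intro f hf
    by_contra hcc
    exact hT (Ideal.eq_top_of_isUnit_mem I (Ideal.mem_comap.1 hf)
      (ell_isUnit fun hm => hcc (mem_PP_iff.1 hm)))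
  -- multiplying the pure parts into J
  have hS1 : ∀ f ∈ J, X 1 * ε L 1 (ν L 1 f) ∈ J := by
    intro f hf
    have hd := dec2 (L := L) f
    rw [hccJ f hf, C_0, add_zero] at hd
    obtain ⟨w, hw⟩ := Ideal.mem_span_singleton.1 hd
    obtain ⟨w0, hw0⟩ := part_dvd 0 f (hccJ f hf)
    have hb : X 1 * ε L 1 (ν L 1 f) =
        X 1 * f - (X 0 * X 1) * w0 - (X 0 * X 1) * (X 1 * w) := by
      linear_combination (-(X 1 : MvPolynomial (Fin 2) L)) * hw
        - (X 1 : MvPolynomial (Fin 2) L) * hw0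
    rw [hb]
    exact sub_mem (sub_mem (J.mul_mem_left (X 1) hf)
      (Ideal.mul_mem_right w0 _ huAJ)) (Ideal.mul_mem_right (X 1 * w) _ huAJ)
  have hS0 : ∀ f ∈ J, X 0 * ε L 0 (ν L 0 f) ∈ J := by
    intro f hf
    have hd := dec2 (L := L) f
    rw [hccJ f hf, C_0, add_zero] at hd
    obtain ⟨w, hw⟩ := Ideal.mem_span_singleton.1 hd
    obtain ⟨w1, hw1⟩ := part_dvd 1 f (hccJ f hf)
    have hb : X 0 * ε L 0 (ν L 0 f) =
        X 0 * f - (X 0 * X 1) * w1 - (X 0 * X 1) * (X 0 * w) := by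
      linear_combination (-(X 0 : MvPolynomial (Fin 2) L)) * hw
        - (X 0 : MvPolynomial (Fin 2) L) * hw1
    rw [hb]
    exact sub_mem (sub_mem (J.mul_mem_left (X 0) hf)
      (Ideal.mul_mem_right w1 _ huAJ)) (Ideal.mul_mem_right (X 0 * w) _ huAJ)
  have hSL1 : ∀ f ∈ J, X 1 ∈ J ∨ ν L 1 f = 0 := by
    intro f hf
    obtain hz | hz := Classical.em (ν L 1 f = 0)
    · exact Or.inr hz
    left
    obtain ⟨k, g, hfac, hgcc⟩ := pure_factor 1 (ν L 1 f) hz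
      (by rw [nu_coeff_zero, hccJ f hf])
    have hmem : X 1 ^ (k + 2) * g ∈ J := by
      have hm := hS1 f hf
      rw [hfac] at hm
      have heq : X 1 * (X 1 ^ (k + 1) * g) = X 1 ^ (k + 2) * g := by ring
      rwa [heq] at hm
    have hXk : (X 1 : MvPolynomial (Fin 2) L) ^ (k + 2) ∈ J := by
      refine mem_of_mul_mem (t := g) (fun h => hgcc (mem_PP_iff.1 h)) ?_
      rwa [mul_comm]
    exact rad _ (k + 2) (by omega) hXk
  have hSL0 : ∀ f ∈ J, X 0 ∈ J ∨ ν L 0 f = 0 := by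
    intro f hf
    obtain hz | hz := Classical.em (ν L 0 f = 0)
    · exact Or.inr hz
    left
    obtain ⟨k, g, hfac, hgcc⟩ := pure_factor 0 (ν L 0 f) hz
      (by rw [nu_coeff_zero, hccJ f hf])
    have hmem : X 0 ^ (k + 2) * g ∈ J := by
      have hm := hS0 f hf
      rw [hfac] at hm
      have heq : X 0 * (X 0 ^ (k + 1) * g) = X 0 ^ (k + 2) * g := by ring
      rwa [heq] at hm
    have hXk : (X 0 : MvPolynomial (Fin 2) L) ^ (k + 2) ∈ J := by
      refine mem_of_mul_mem (t := g) (fun h => hgcc (mem_PP_iff.1 h)) ?_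
      rwa [mul_comm]
    exact rad _ (k + 2) (by omega) hXk
  -- final case analysis
  obtain hx | hx := Classical.em ((X 0 : MvPolynomial (Fin 2) L) ∈ J) <;>
    obtain hy | hy := Classical.em ((X 1 : MvPolynomial (Fin 2) L) ∈ J)
  · -- I = (x, y)
    refine Or.inr (Or.inr (Or.inr (Or.inl ?_)))
    apply le_antisymm
    · conv_lhs => rw [← map_comap_ell I]
      rw [Ideal.map_le_iff_le_comap]
      intro f hf
      have hfP : f ∈ PP L := mem_PP_iff.2 (hccJ f hf)
      rw [Ideal.mem_comap]
      obtain ⟨a, b, hab⟩ := Ideal.mem_span_pair.1 hfP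
      exact Ideal.mem_span_pair.2 ⟨ℓ a, ℓ b, by rw [← map_mul, ← map_mul, ← map_add, hab]⟩
    · rw [Ideal.span_le]
      rintro r (rfl | rfl)
      · exact Ideal.mem_comap.1 hx
      · exact Ideal.mem_comap.1 hy
  · -- I = (x)
    refine Or.inr (Or.inl ?_)
    apply le_antisymm
    · conv_lhs => rw [← map_comap_ell I]
      rw [Ideal.map_le_iff_le_comap]
      intro f hf
      rw [Ideal.mem_comap, Ideal.mem_span_singleton]
      have hz1 : ν L 1 f = 0 := (hSL1 f hf).resolve_left hy
      have hd := dec2 (L := L) f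
      rw [hccJ f hf, C_0, add_zero] at hd
      obtain ⟨w, hw⟩ := Ideal.mem_span_singleton.1 hd
      obtain ⟨w0, hw0⟩ := part_dvd 0 f (hccJ f hf)
      have hε1 : ε L 1 (ν L 1 f) = 0 := by rw [hz1, map_zero]
      have : f = X 0 * (w0 + X 1 * w) := by linear_combination hw + hw0 + hε1
      exact map_dvd (ℓ) ⟨w0 + X 1 * w, this⟩
    · rw [Ideal.span_le]
      rintro r rfl
      exact Ideal.mem_comap.1 hx
  · -- I = (y)
    refine Or.inr (Or.inr (Or.inl ?_))
    apply le_antisymm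
    · conv_lhs => rw [← map_comap_ell I]
      rw [Ideal.map_le_iff_le_comap]
      intro f hf
      rw [Ideal.mem_comap, Ideal.mem_span_singleton]
      have hz0 : ν L 0 f = 0 := (hSL0 f hf).resolve_left hx
      have hd := dec2 (L := L) f
      rw [hccJ f hf, C_0, add_zero] at hd
      obtain ⟨w, hw⟩ := Ideal.mem_span_singleton.1 hd
      obtain ⟨w1, hw1⟩ := part_dvd 1 f (hccJ f hf)
      have hε0 : ε L 0 (ν L 0 f) = 0 := by rw [hz0, map_zero]
      have : f = X 1 * (w1 + X 0 * w) := by linear_combination hw + hw1 + hε0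
      exact map_dvd (ℓ) ⟨w1 + X 0 * w, this⟩
    · rw [Ideal.span_le]
      rintro r rfl
      exact Ideal.mem_comap.1 hy
  · -- I = (xy)
    refine Or.inl ?_
    apply le_antisymm
    · conv_lhs => rw [← map_comap_ell I]
      rw [Ideal.map_le_iff_le_comap]
      intro f hf
      rw [Ideal.mem_comap, Ideal.mem_span_singleton]
      have hz0 : ν L 0 f = 0 := (hSL0 f hf).resolve_left hx
      have hz1 : ν L 1 f = 0 := (hSL1 f hf).resolve_left hy
      have hd := dec2 (L := L) f
      rw [hccJ f hf, C_0, add_zero] at hd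
      obtain ⟨w, hw⟩ := Ideal.mem_span_singleton.1 hd
      have hε0 : ε L 0 (ν L 0 f) = 0 := by rw [hz0, map_zero]
      have hε1 : ε L 1 (ν L 1 f) = 0 := by rw [hz1, map_zero]
      have : f = (X 0 * X 1) * w := by linear_combination hw + hε0 + hε1
      exact map_dvd (ℓ) ⟨w, this⟩
    · exact h1

end Classify

/-! ### Soundness: the five ideals satisfy the condition -/

section Sound

lemma memCalI_iff {S : Type*} [CommRing S] (p : ℕ) (u : S) (I : Ideal S) :
    MemCalI p (fun _ : Fin 1 => u) I ↔
      Ideal.span {u} ≤ I ∧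
        ∀ r ∈ I, u ^ (p - 1) * r ∈ I.bracketPow p ⊔ Ideal.span {u ^ p} := by
  unfold MemCalI
  have h1 : Set.range (fun _ : Fin 1 => u) = {u} := Set.range_const
  have h2 : Set.range (fun i : Fin 1 => (fun _ : Fin 1 => u) i ^ p) = {u ^ p} :=
    Set.range_const
  have h3 : (∏ _i : Fin 1, u) = u := Fin.prod_univ_one _
  rw [h1, h2, h3]
  constructor
  · rintro ⟨ha, hb⟩
    exact ⟨ha, fun r hr => hb r (Ideal.mem_sup_left hr)⟩
  · rintro ⟨ha, hb⟩
    refine ⟨ha, fun r hr => ?_⟩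
    rw [sup_eq_left.2 ha] at hr
    exact hb r hr

variable {S : Type*} [CommRing S] (x y : S) {p : ℕ}

lemma sound_u (hp : 1 ≤ p) : MemCalI p (fun _ : Fin 1 => x * y) (Ideal.span {x * y}) := by
  rw [memCalI_iff]
  refine ⟨le_rfl, fun r hr => ?_⟩
  obtain ⟨c, hc⟩ := Ideal.mem_span_singleton'.1 hr
  apply Ideal.mem_sup_right
  obtain ⟨q, rfl⟩ : ∃ q, p = q + 1 := ⟨p - 1, (Nat.sub_add_cancel hp).symm⟩
  apply Ideal.mem_span_singleton'.2 ⟨c, ?_⟩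
  rw [← hc]
  simp only [Nat.add_sub_cancel]
  ring

lemma sound_x (hp : 1 ≤ p) : MemCalI p (fun _ : Fin 1 => x * y) (Ideal.span {x}) := by
  rw [memCalI_iff]
  constructor
  · rw [Ideal.span_le]
    rintro r rfl
    exact Ideal.mem_span_singleton.2 (dvd_mul_right x y)
  · intro r hr
    obtain ⟨c, hc⟩ := Ideal.mem_span_singleton'.1 hr
    apply Ideal.mem_sup_left
    have hxp : x ^ p ∈ (Ideal.span {x}).bracketPow p :=
      Ideal.subset_span ⟨x, Ideal.subset_span rfl, rfl⟩
    obtain ⟨q, rfl⟩ : ∃ q, p = q + 1 := ⟨p - 1, (Nat.sub_add_cancel hp).symm⟩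
    have heq : (x * y) ^ (q + 1 - 1) * r = (y ^ (q + 1 - 1) * c) * x ^ (q + 1) := by
      rw [← hc]
      simp only [Nat.add_sub_cancel]
      ring
    rw [heq]
    exact Ideal.mul_mem_left _ _ hxp

lemma sound_y (hp : 1 ≤ p) : MemCalI p (fun _ : Fin 1 => x * y) (Ideal.span {y}) := by
  rw [memCalI_iff]
  constructor
  · rw [Ideal.span_le]
    rintro r rfl
    exact Ideal.mem_span_singleton.2 (dvd_mul_left y x)
  · intro r hr
    obtain ⟨c, hc⟩ := Ideal.mem_span_singleton'.1 hr
    apply Ideal.mem_sup_left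
    have hyp : y ^ p ∈ (Ideal.span {y}).bracketPow p :=
      Ideal.subset_span ⟨y, Ideal.subset_span rfl, rfl⟩
    obtain ⟨q, rfl⟩ : ∃ q, p = q + 1 := ⟨p - 1, (Nat.sub_add_cancel hp).symm⟩
    have heq : (x * y) ^ (q + 1 - 1) * r = (x ^ (q + 1 - 1) * c) * y ^ (q + 1) := by
      rw [← hc]
      simp only [Nat.add_sub_cancel]
      ring
    rw [heq]
    exact Ideal.mul_mem_left _ _ hyp

lemma sound_pair (hp : 1 ≤ p) : MemCalI p (fun _ : Fin 1 => x * y) (Ideal.span {x, y}) := by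
  rw [memCalI_iff]
  constructor
  · rw [Ideal.span_le]
    rintro r rfl
    exact Ideal.mem_span_pair.2 ⟨y, 0, by ring⟩
  · intro r hr
    obtain ⟨a, b, hab⟩ := Ideal.mem_span_pair.1 hr
    apply Ideal.mem_sup_left
    have hxp : x ^ p ∈ (Ideal.span {x, y}).bracketPow p :=
      Ideal.subset_span ⟨x, Ideal.subset_span (by simp), rfl⟩
    have hyp : y ^ p ∈ (Ideal.span {x, y}).bracketPow p :=
      Ideal.subset_span ⟨y, Ideal.subset_span (by simp), rfl⟩
    obtain ⟨q, rfl⟩ : ∃ q, p = q + 1 := ⟨p - 1, (Nat.sub_add_cancel hp).symm⟩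
    have heq : (x * y) ^ (q + 1 - 1) * r =
        (a * y ^ (q + 1 - 1)) * x ^ (q + 1) + (b * x ^ (q + 1 - 1)) * y ^ (q + 1) := by
      rw [← hab]
      simp only [Nat.add_sub_cancel]
      ring
    rw [heq]
    exact add_mem (Ideal.mul_mem_left _ _ hxp) (Ideal.mul_mem_left _ _ hyp)

lemma sound_top : MemCalI p (fun _ : Fin 1 => x * y) (⊤ : Ideal S) := by
  rw [memCalI_iff]
  refine ⟨le_top, fun r _ => ?_⟩
  apply Ideal.mem_sup_left
  have h1 : (1 : S) ∈ (⊤ : Ideal S).bracketPow p :=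
    Ideal.subset_span ⟨1, trivial, one_pow p⟩
  have := Ideal.eq_top_of_isUnit_mem _ h1 isUnit_one
  rw [this]
  trivial

end Sound

/-! ### Descent along a field extension -/

section Descent

variable {K1 K2 : Type*} [Field K1] [Field K2] [Algebra K1 K2]
  [(PP K1).IsPrime] [(PP K2).IsPrime]

local notation "A1" => MvPolynomial (Fin 2) K1
local notation "A2" => MvPolynomial (Fin 2) K2
local notation "R1" => Localization.AtPrime (PP K1)
local notation "R2" => Localization.AtPrime (PP K2)
local notation "ℓ1" => algebraMap (MvPolynomial (Fin 2) K1) (Localization.AtPrime (PP K1))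
local notation "ℓ2" => algebraMap (MvPolynomial (Fin 2) K2) (Localization.AtPrime (PP K2))
local notation "χ" => MvPolynomial.map (algebraMap K1 K2)

lemma chi_compl {s : A1} (hs : s ∉ PP K1) : χ s ∉ PP K2 := by
  rw [mem_PP_iff, constantCoeff_map]
  rw [mem_PP_iff] at hs
  exact fun h => hs ((algebraMap K1 K2).injective (by rw [h, map_zero]))

lemma chi_le_compl : (PP K1).primeCompl ≤ Submonoid.comap (χ : A1 →+* A2)
    (PP K2).primeCompl := fun _ hs => chi_compl hs

/-- The induced map on localizations. -/
noncomputable def rho : (Localization.AtPrime (PP K1)) →+* (Localization.AtPrime (PP K2)) :=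
  IsLocalization.map _ (χ : A1 →+* A2) chi_le_compl

lemma rho_ell (a : A1) : rho (ℓ1 a) = ℓ2 (χ a) :=
  RingHom.congr_fun (IsLocalization.map_comp chi_le_compl) a

/-- A `K1`-linear retraction of `K2` onto `K1`. -/
lemma exists_pi : ∃ π : K2 →ₗ[K1] K1, ∀ c : K1, π (algebraMap K1 K2 c) = c := by
  set ι : K1 →ₗ[K1] K2 := Algebra.linearMap K1 K2 with hι
  have hinj : Function.Injective ι := (algebraMap K1 K2).injective
  obtain ⟨q, hq⟩ := Submodule.exists_isCompl (LinearMap.range ι)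
  set e := LinearEquiv.ofInjective ι hinj with he
  refine ⟨e.symm.toLinearMap ∘ₗ (Submodule.linearProjOfIsCompl _ q hq), fun c => ?_⟩
  have h1 : Submodule.linearProjOfIsCompl _ q hq (ι c) = e c := by
    have : (ι c) = ((e c : LinearMap.range ι) : K2) := by
      rw [he, LinearEquiv.ofInjective_apply]
    rw [this]
    exact Submodule.linearProjOfIsCompl_apply_left hq (e c)
  simp only [LinearMap.comp_apply]
  rw [show (algebraMap K1 K2 c) = ι c from rfl, h1]
  simp

variable (π : K2 →ₗ[K1] K1) (hπ : ∀ c : K1, π (algebraMap K1 K2 c) = c)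

/-- Coefficientwise retraction of polynomial rings. -/
noncomputable def pit (f : A2) : A1 :=
  Finsupp.sum (AddMonoidAlgebra.coeff f) fun m c => monomial m (π c)

lemma pit_coeff (f : A2) (m : Fin 2 →₀ ℕ) : coeff m (pit π f) = π (coeff m f) := by
  classical
  rw [pit, Finsupp.sum]
  refine Eq.trans (map_sum (coeffAddMonoidHom m) _ f.support) ?_
  simp only [coeffAddMonoidHom_apply, coeff_monomial]
  rw [Finset.sum_ite_eq']
  split
  · rfl
  · rw [notMem_support_iff.1 (by assumption), map_zero]

lemma pit_add (f g : A2) : pit π (f + g) = pit π f + pit π g := by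
  apply MvPolynomial.ext
  intro m
  rw [coeff_add, pit_coeff, pit_coeff, pit_coeff, coeff_add, map_add]

/-- `pit` bundled. -/
noncomputable def pitHom : MvPolynomial (Fin 2) K2 →+ MvPolynomial (Fin 2) K1 where
  toFun := pit π
  map_zero' := by
    apply MvPolynomial.ext
    intro m
    rw [pit_coeff, coeff_zero, coeff_zero, map_zero]
  map_add' := pit_add π

lemma pit_chi_mul (a : A1) (f : A2) : pit π (χ a * f) = a * pit π f := by
  apply MvPolynomial.ext
  intro m
  rw [pit_coeff, coeff_mul, coeff_mul, map_sum]
  apply Finset.sum_congr rfl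
  intro x _
  rw [coeff_map, pit_coeff, ← Algebra.smul_def, map_smul, smul_eq_mul]

include hπ in
lemma pit_chi (a : A1) : pit π (χ a) = a := by
  have := pit_chi_mul π a 1
  rw [mul_one] at this
  rw [show (pit π 1 : A1) = 1 from ?_] at this
  · rw [mul_one] at this; exact this
  · apply MvPolynomial.ext
    intro m
    rw [pit_coeff]
    rw [show (1 : A2) = C ((algebraMap K1 K2) 1) from by rw [map_one, C_1]]
    rw [show (1 : A1) = C (1 : K1) from C_1.symm]
    rw [coeff_C, coeff_C]
    split
    · rw [hπ]
    · rw [map_zero]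

lemma pit_maps_into (J : Ideal A1) {z : A2} (hz : z ∈ J.map (χ : A1 →+* A2)) :
    pit π z ∈ J := by
  have hz' : z ∈ Ideal.span ((χ : A1 →+* A2) '' J) := hz
  obtain ⟨n, aa, gg, hsum⟩ := Submodule.mem_span_set'.1 hz'
  have : pit π z = ∑ i, pit π (aa i • (gg i : A2)) := by
    rw [← hsum]
    exact map_sum (pitHom π) _ _
  rw [this]
  apply sum_mem
  intro i _
  obtain ⟨w, hwJ, hwe⟩ := (gg i).2
  have heq : aa i • (gg i : A2) = χ w * aa i := by
    rw [smul_eq_mul, ← hwe, mul_comm]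
  rw [heq, pit_chi_mul]
  exact Ideal.mul_mem_right _ _ hwJ

include hπ in
/-- The core descent lemma. -/
lemma descend (I : Ideal (Localization.AtPrime (PP K1))) (f : A1)
    (h : ℓ2 (χ f) ∈ I.map (rho (K1 := K1) (K2 := K2))) : ℓ1 f ∈ I := by
  have hmm : I.map (rho (K1 := K1) (K2 := K2)) =
      ((I.comap (ℓ1)).map (χ : A1 →+* A2)).map (ℓ2) := by
    conv_lhs => rw [← map_comap_ell I]
    rw [Ideal.map_map, Ideal.map_map,
      show (rho (K1 := K1) (K2 := K2)).comp (algebraMap A1 R1)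
        = (algebraMap A2 R2).comp (χ : A1 →+* A2) from IsLocalization.map_comp chi_le_compl]
  rw [hmm] at h
  obtain ⟨s', hs', hsf⟩ := exists_smul_mem h
  set c := constantCoeff s' with hc
  have hc0 : c ≠ 0 := fun h0 => hs' (mem_PP_iff.2 h0)
  have hs2 : χ f * (C c⁻¹ * s') ∈ (I.comap (ℓ1)).map (χ : A1 →+* A2) := by
    have : χ f * (C c⁻¹ * s') = C c⁻¹ * (s' * χ f) := by ring
    rw [this]
    exact Ideal.mul_mem_left _ _ hsf
  have hmem : f * pit π (C c⁻¹ * s') ∈ I.comap (ℓ1) := by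
    rw [← pit_chi_mul]
    exact pit_maps_into π _ hs2
  have hccp : constantCoeff (pit π (C c⁻¹ * s')) = 1 := by
    have h0 : constantCoeff (pit π (C c⁻¹ * s')) = coeff 0 (pit π (C c⁻¹ * s')) := by
      rw [constantCoeff_eq]
    have h1 : coeff 0 (C c⁻¹ * s' : A2) = c⁻¹ * c := by
      have : constantCoeff (C c⁻¹ * s' : A2) = c⁻¹ * c := by
        rw [map_mul, constantCoeff_C, hc]
      rw [constantCoeff_eq] at this
      exact this
    rw [h0, pit_coeff, h1, inv_mul_cancel₀ hc0,
      ← map_one (algebraMap K1 K2), hπ]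
  have hnP : pit π (C c⁻¹ * s') ∉ PP K1 := fun h =>
    one_ne_zero (hccp ▸ mem_PP_iff.1 h)
  have := mem_of_mul_mem hnP (by rwa [mul_comm] at hmem)
  exact Ideal.mem_comap.1 this

lemma comap_map_rho (I : Ideal (Localization.AtPrime (PP K1))) :
    (I.map (rho (K1 := K1) (K2 := K2))).comap (rho (K1 := K1) (K2 := K2)) = I := by
  obtain ⟨π, hπ⟩ := exists_pi (K1 := K1) (K2 := K2)
  apply le_antisymm
  · intro r hr
    rw [Ideal.mem_comap] at hr
    obtain ⟨⟨a, ss⟩, hsur⟩ := IsLocalization.surj (PP K1).primeCompl r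
    have h2 : rho (ℓ1 a) ∈ I.map (rho (K1 := K1) (K2 := K2)) := by
      rw [← hsur, map_mul]
      exact Ideal.mul_mem_right _ _ hr
    rw [rho_ell] at h2
    have h3 : ℓ1 a ∈ I := descend π hπ I a h2
    have hu := ell_isUnit (K := K1) ss.2
    have : r = hu.unit⁻¹ * (r * ℓ1 ss.1) := by
      rw [mul_comm r, ← mul_assoc]
      simp [IsUnit.val_inv_mul]
    rw [this, hsur]
    exact Ideal.mul_mem_left _ _ h3
  · exact Ideal.le_comap_map

lemma map_rho_inj {I₁ I₂ : Ideal (Localization.AtPrime (PP K1))}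
    (h : I₁.map (rho (K1 := K1) (K2 := K2)) = I₂.map (rho (K1 := K1) (K2 := K2))) :
    I₁ = I₂ := by
  rw [← comap_map_rho (K2 := K2) I₁, ← comap_map_rho (K2 := K2) I₂, h]

lemma chi_u : (χ) (X 0 * X 1) = X 0 * X 1 := by
  rw [map_mul, MvPolynomial.map_X, MvPolynomial.map_X]

lemma rho_ell_u : rho (K1 := K1) (K2 := K2) (ℓ1 (X 0 * X 1)) = ℓ2 (X 0 * X 1) := by
  have h1 := rho_ell (K1 := K1) (K2 := K2) (X 0 * X 1)
  simp only [map_mul, MvPolynomial.map_X] at h1 ⊢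
  exact h1

/-- The defining conditions transfer along `rho`. -/
lemma transfer (p : ℕ) (I : Ideal (Localization.AtPrime (PP K1)))
    (ha : Ideal.span {ℓ1 (X 0 * X 1)} ≤ I)
    (hb : ∀ r ∈ I, (ℓ1 (X 0 * X 1)) ^ (p - 1) * r ∈
      I.bracketPow p ⊔ Ideal.span {ℓ1 (X 0 * X 1) ^ p}) :
    Ideal.span {ℓ2 (X 0 * X 1)} ≤ I.map (rho (K1 := K1) (K2 := K2)) ∧
      ∀ r ∈ I.map (rho (K1 := K1) (K2 := K2)), (ℓ2 (X 0 * X 1)) ^ (p - 1) * r ∈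
        (I.map (rho (K1 := K1) (K2 := K2))).bracketPow p ⊔
          Ideal.span {ℓ2 (X 0 * X 1) ^ p} := by
  have hchi : ℓ2 (X 0 * X 1) = rho (ℓ1 (X 0 * X 1)) := rho_ell_u.symm
  constructor
  · rw [Ideal.span_le]
    rintro r rfl
    rw [SetLike.mem_coe, hchi]
    exact Ideal.mem_map_of_mem _ (ha (Ideal.subset_span rfl))
  · intro r hr
    have hr' : r ∈ Ideal.span ((rho (K1 := K1) (K2 := K2)) '' I) := hr
    obtain ⟨n, aa, gg, hsum⟩ := Submodule.mem_span_set'.1 hr'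
    rw [← hsum, Finset.mul_sum]
    apply sum_mem
    intro i _
    obtain ⟨w, hwI, hwe⟩ := (gg i).2
    have key : (ℓ2 (X 0 * X 1)) ^ (p - 1) * (gg i : Localization.AtPrime (PP K2)) ∈
        (I.map (rho (K1 := K1) (K2 := K2))).bracketPow p ⊔
          Ideal.span {ℓ2 (X 0 * X 1) ^ p} := by
      have himg : rho ((ℓ1 (X 0 * X 1)) ^ (p - 1) * w) ∈
          Ideal.map (rho (K1 := K1) (K2 := K2))
            (I.bracketPow p ⊔ Ideal.span {ℓ1 (X 0 * X 1) ^ p}) :=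
        Ideal.mem_map_of_mem _ (hb w hwI)
      have hle : Ideal.map (rho (K1 := K1) (K2 := K2))
          (I.bracketPow p ⊔ Ideal.span {ℓ1 (X 0 * X 1) ^ p}) ≤
          (I.map (rho (K1 := K1) (K2 := K2))).bracketPow p ⊔
            Ideal.span {ℓ2 (X 0 * X 1) ^ p} := by
        rw [Ideal.map_sup]
        apply sup_le_sup
        · rw [Ideal.map_le_iff_le_comap, Ideal.bracketPow, Ideal.span_le]
          rintro _ ⟨t, htI, rfl⟩
          rw [SetLike.mem_coe, Ideal.mem_comap, map_pow]
          exact Ideal.subset_span ⟨rho t, Ideal.mem_map_of_mem _ htI, rfl⟩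
        · rw [Ideal.map_span, Set.image_singleton, map_pow (rho (K1 := K1) (K2 := K2)),
            ← hchi]
      have h4 := hle himg
      rw [map_mul (rho (K1 := K1) (K2 := K2)), map_pow (rho (K1 := K1) (K2 := K2)),
        ← hchi, hwe] at h4
      exact h4
    have heq : (ℓ2 (X 0 * X 1)) ^ (p - 1) * (aa i • (gg i : Localization.AtPrime (PP K2)))
        = aa i • ((ℓ2 (X 0 * X 1)) ^ (p - 1) * (gg i : Localization.AtPrime (PP K2))) := by
      rw [smul_eq_mul, smul_eq_mul]
      ring
    rw [heq]
    exact Submodule.smul_mem _ _ key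

lemma map_rho_span_u : (Ideal.span {ℓ1 (X 0 * X 1)}).map (rho (K1 := K1) (K2 := K2))
    = Ideal.span {ℓ2 (X 0 * X 1)} := by
  rw [Ideal.map_span, Set.image_singleton, rho_ell_u]

lemma map_rho_span_x : (Ideal.span {ℓ1 (X 0)}).map (rho (K1 := K1) (K2 := K2))
    = Ideal.span {ℓ2 (X 0)} := by
  rw [Ideal.map_span, Set.image_singleton, rho_ell, MvPolynomial.map_X]

lemma map_rho_span_y : (Ideal.span {ℓ1 (X 1)}).map (rho (K1 := K1) (K2 := K2))
    = Ideal.span {ℓ2 (X 1)} := by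
  rw [Ideal.map_span, Set.image_singleton, rho_ell, MvPolynomial.map_X]

lemma map_rho_span_pair : (Ideal.span {ℓ1 (X 0), ℓ1 (X 1)}).map (rho (K1 := K1) (K2 := K2))
    = Ideal.span {ℓ2 (X 0), ℓ2 (X 1)} := by
  rw [Ideal.map_span, Set.image_pair, rho_ell, rho_ell, MvPolynomial.map_X,
    MvPolynomial.map_X]

lemma map_rho_top : (⊤ : Ideal (Localization.AtPrime (PP K1))).map
    (rho (K1 := K1) (K2 := K2)) = ⊤ :=
  Ideal.map_top _

end Descent

end S14

open MvPolynomial in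
/-- Let `K` be a field of prime characteristic `p` and let `R` be the
localization of `K[x,y]` at the maximal ideal `(x,y)`.  Then the set of ideals `I` of
`R` with `xyR ⊆ I` and `(xy)^(p-1)·(I + xyR) ⊆ I^{[p]} + (xy)^p R` (i.e. the set
`𝓘(R, xy)`) is exactly `{xyR, xR, yR, (x,y)R, R}`. -/
theorem statement14 (K : Type*) [Field K] (p : ℕ) (hp : p.Prime) [CharP K p]
    [hP : (Ideal.span {X 0, X 1} : Ideal (MvPolynomial (Fin 2) K)).IsPrime] :
    {I : Ideal (Localization.AtPrime
          (Ideal.span {X 0, X 1} : Ideal (MvPolynomial (Fin 2) K))) |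
        MemCalI p (fun _ : Fin 1 =>
          algebraMap (MvPolynomial (Fin 2) K) _ (X 0) *
            algebraMap (MvPolynomial (Fin 2) K) _ (X 1)) I} =
      {Ideal.span {algebraMap (MvPolynomial (Fin 2) K) _ (X 0) *
          algebraMap (MvPolynomial (Fin 2) K) _ (X 1)},
        Ideal.span {algebraMap (MvPolynomial (Fin 2) K) _ (X 0)},
        Ideal.span {algebraMap (MvPolynomial (Fin 2) K) _ (X 1)},
        Ideal.span {algebraMap (MvPolynomial (Fin 2) K) _ (X 0),
          algebraMap (MvPolynomial (Fin 2) K) _ (X 1)},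
        ⊤} := by
    classical
  haveI : Fact p.Prime := ⟨hp⟩
  haveI : CharP (AlgebraicClosure K) p :=
    charP_of_injective_algebraMap (algebraMap K (AlgebraicClosure K)).injective p
  haveI h2P : (S14.PP (AlgebraicClosure K)).IsPrime := S14.PP_isPrime
  ext I
  simp only [Set.mem_setOf_eq, Set.mem_insert_iff, Set.mem_singleton_iff]
  constructor
  · intro hI
    rw [S14.memCalI_iff] at hI
    obtain ⟨ha, hb⟩ := hI
    have humul : algebraMap (MvPolynomial (Fin 2) K)
          (Localization.AtPrime (S14.PP K)) (X 0) *
          algebraMap (MvPolynomial (Fin 2) K) (Localization.AtPrime (S14.PP K)) (X 1)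
        = algebraMap (MvPolynomial (Fin 2) K) (Localization.AtPrime (S14.PP K))
          (X 0 * X 1) := (map_mul _ _ _).symm
    rw [humul] at ha hb
    obtain ⟨ha', hb'⟩ := S14.transfer (K1 := K) (K2 := AlgebraicClosure K) p I ha hb
    have hcls := S14.classify (L := AlgebraicClosure K) (p := p)
      (I.map (S14.rho (K1 := K) (K2 := AlgebraicClosure K))) ha' hb'
    rcases hcls with h | h | h | h | h
    · left
      have := S14.map_rho_inj (K2 := AlgebraicClosure K) (I₁ := I)
        (I₂ := Ideal.span {algebraMap (MvPolynomial (Fin 2) K)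
          (Localization.AtPrime (S14.PP K)) (X 0 * X 1)})
        (by rw [S14.map_rho_span_u, h])
      rw [this, ← humul]
    · right; left
      have := S14.map_rho_inj (K2 := AlgebraicClosure K) (I₁ := I)
        (I₂ := Ideal.span {algebraMap (MvPolynomial (Fin 2) K)
          (Localization.AtPrime (S14.PP K)) (X 0)})
        (by rw [S14.map_rho_span_x, h])
      rw [this]
    · right; right; left
      have := S14.map_rho_inj (K2 := AlgebraicClosure K) (I₁ := I)
        (I₂ := Ideal.span {algebraMap (MvPolynomial (Fin 2) K)
          (Localization.AtPrime (S14.PP K)) (X 1)})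
        (by rw [S14.map_rho_span_y, h])
      rw [this]
    · right; right; right; left
      have := S14.map_rho_inj (K2 := AlgebraicClosure K) (I₁ := I)
        (I₂ := Ideal.span {algebraMap (MvPolynomial (Fin 2) K)
          (Localization.AtPrime (S14.PP K)) (X 0),
          algebraMap (MvPolynomial (Fin 2) K)
          (Localization.AtPrime (S14.PP K)) (X 1)})
        (by rw [S14.map_rho_span_pair, h])
      rw [this]
    · right; right; right; right
      exact S14.map_rho_inj (K2 := AlgebraicClosure K) (I₁ := I) (I₂ := ⊤)
        (by rw [S14.map_rho_top, h])
  · intro h5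
    have hp1 : 1 ≤ p := hp.one_le
    rcases h5 with rfl | rfl | rfl | rfl | rfl
    · exact S14.sound_u _ _ hp1
    · exact S14.sound_x _ _ hp1
    · exact S14.sound_y _ _ hp1
    · exact S14.sound_pair _ _ hp1
    · exact S14.sound_top _ _
end
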